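/- If X is a real random variable with invertible distribution function F, density f, upper endpoint x_+ and lower endpoint x_-, then the cross-over function T(t) = (1/F(t))∫_{-∞}^t x dF + (1/(1-F(t)))∫_t^∞ x dF - 2t satisfies lim sup_{t→x_+} T(t) < 0 and lim inf_{t→x_-} T(t) > 0. -/

import Mathlib

open MeasureTheory Set Filter

/-- The distribution function of a probability measure on ℝ. -/
noncomputable def cdfF (μ : Measure ℝ) (t : ℝ) : ℝ := (μ (Iic t)).toReal

/-- The cross-over function `T`. -/
noncomputable def crossT (μ : Measure ℝ) (t : ℝ) : ℝ :=
  (∫ x in Iic t, x ∂μ) / cdfF μ t + (∫ x in Ioi t, x ∂μ) / (1 - cdfF μ t) - 2 * t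

theorem stmt0 (μ : Measure ℝ) [IsProbabilityMeasure μ] (f : ℝ → ℝ)
    (hdens : ∀ x, HasDerivAt (cdfF μ) (f x) x)
    (hinv : StrictMonoOn (cdfF μ) {x | 0 < cdfF μ x ∧ cdfF μ x < 1})
    (hint : Integrable (fun x : ℝ => x) μ)
    (xm xp : ℝ)
    (hxp : IsLUB {x | cdfF μ x < 1} xp)
    (hxm : IsGLB {x | 0 < cdfF μ x} xm) :
    limsup (crossT μ) (nhdsWithin xp (Iio xp)) < 0 ∧
      0 < liminf (crossT μ) (nhdsWithin xm (Ioi xm)) := by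
  set F := cdfF μ with hF
  have hcont : Continuous F := by
    rw [continuous_iff_continuousAt]
    exact fun x => (hdens x).continuousAt
  have hmono : Monotone F := fun a b h =>
    ENNReal.toReal_mono (measure_ne_top _ _) (measure_mono (Iic_subset_Iic.2 h))
  have hle1 : ∀ t, F t ≤ 1 := by
    intro t
    have : μ (Iic t) ≤ 1 := prob_le_one
    simpa [hF, cdfF] using ENNReal.toReal_mono ENNReal.one_ne_top this
  have hge0 : ∀ t, 0 ≤ F t := fun t => ENNReal.toReal_nonneg
  -- F t < 1 for t < xp
  have hlt1 : ∀ t, t < xp → F t < 1 := by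
    intro t ht
    rcases lt_or_eq_of_le (hle1 t) with h | h
    · exact h
    · exfalso
      have hub : t ∈ upperBounds {x | F x < 1} := by
        intro x hx
        by_contra hxt
        push_neg at hxt
        have := hmono hxt.le
        rw [h] at this
        exact absurd (lt_of_le_of_lt this hx) (lt_irrefl _)
      exact absurd (hxp.2 hub) (not_le.2 ht)
  have hgt0 : ∀ t, xm < t → 0 < F t := by
    intro t ht
    rcases lt_or_eq_of_le (hge0 t) with h | h
    · exact h
    · exfalso
      have hlb : t ∈ lowerBounds {x | 0 < F x} := by
        intro x hx
        by_contra hxt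
        push_neg at hxt
        have := hmono hxt.le
        rw [← h] at this
        exact absurd (lt_of_lt_of_le hx this) (lt_irrefl _)
      exact absurd (hxm.2 hlb) (not_le.2 ht)
  -- F xp = 1
  have hFxp : F xp = 1 := by
    have h1 : Tendsto F (nhdsWithin xp (Ioi xp)) (nhds (F xp)) :=
      (hcont.tendsto xp).mono_left nhdsWithin_le_nhds
    have h2 : Tendsto F (nhdsWithin xp (Ioi xp)) (nhds 1) := by
      apply Tendsto.congr' _ tendsto_const_nhds
      filter_upwards [self_mem_nhdsWithin] with x hx
      have : x ∉ {x | F x < 1} := fun hmem => absurd (hxp.1 hmem) (not_le.2 hx)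
      exact ((lt_or_eq_of_le (hle1 x)).resolve_left this).symm
    exact tendsto_nhds_unique h1 h2
  have hFxm : F xm = 0 := by
    have h1 : Tendsto F (nhdsWithin xm (Iio xm)) (nhds (F xm)) :=
      (hcont.tendsto xm).mono_left nhdsWithin_le_nhds
    have h2 : Tendsto F (nhdsWithin xm (Iio xm)) (nhds 0) := by
      apply Tendsto.congr' _ tendsto_const_nhds
      filter_upwards [self_mem_nhdsWithin] with x hx
      have : x ∉ {x | 0 < F x} := fun hmem => absurd (hxm.1 hmem) (not_le.2 hx)
      exact ((lt_or_eq_of_le (hge0 x)).resolve_left this)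
    exact tendsto_nhds_unique h1 h2
  have hmp : xm < xp := by
    by_contra h
    push_neg at h
    have := hmono h
    rw [hFxp, hFxm] at this
    linarith
  -- 1 - F t = μ (Ioi t)
  have hIoi : ∀ t, (μ (Ioi t)).toReal = 1 - F t := by
    intro t
    have : μ (Ioi t) = 1 - μ (Iic t) := by
      rw [← compl_Iic]
      exact prob_compl_eq_one_sub measurableSet_Iic
    rw [this, ENNReal.toReal_sub_of_le prob_le_one (by simp)]
    simp [hF, cdfF]
  -- μ gives no mass above xp / below xm
  have hμxp : μ (Ioi xp) = 0 := by
    have h := hIoi xp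
    rw [hFxp] at h
    simp only [sub_self] at h
    exact (ENNReal.toReal_eq_zero_iff _).1 h |>.resolve_right (measure_ne_top _ _)
  have hμxm : μ (Iio xm) = 0 := by
    have h : μ (Iic xm) = 0 := by
      have : (μ (Iic xm)).toReal = 0 := hFxm
      exact (ENNReal.toReal_eq_zero_iff _).1 this |>.resolve_right (measure_ne_top _ _)
    exact measure_mono_null Iio_subset_Iic_self h
  have hae_le : ∀ᵐ x ∂μ, x ≤ xp := by
    rw [ae_iff]
    simp only [not_le]; exact hμxp
  have hae_ge : ∀ᵐ x ∂μ, xm ≤ x := by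
    rw [ae_iff]
    simp only [not_le]; exact hμxm
  set A : ℝ → ℝ := fun t => ∫ x in Iic t, x ∂μ with hA
  set B : ℝ → ℝ := fun t => ∫ x in Ioi t, x ∂μ with hB
  set L : ℝ := ∫ x, x ∂μ with hL
  have hAB : ∀ t, A t + B t = L := fun t =>
    intervalIntegral.integral_Iic_add_Ioi hint.integrableOn hint.integrableOn
  -- bounds on B
  have hBub : ∀ t, B t ≤ xp * (1 - F t) := by
    intro t
    have h1 : B t ≤ ∫ _ in Ioi t, xp ∂μ := by
      apply integral_mono_ae hint.integrableOn (integrableOn_const (C := xp) (measure_ne_top _ _))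
      exact ae_restrict_of_ae hae_le
    calc B t ≤ ∫ _ in Ioi t, xp ∂μ := h1
      _ = xp * (1 - F t) := by rw [setIntegral_const, smul_eq_mul, measureReal_def, hIoi, mul_comm]
  have hBlb : ∀ t, t * (1 - F t) ≤ B t := by
    intro t
    have h1 : (∫ _ in Ioi t, t ∂μ) ≤ B t := by
      apply setIntegral_mono_on (integrableOn_const (C := t) (measure_ne_top _ _))
        hint.integrableOn measurableSet_Ioi
      intro x hx; exact le_of_lt hx
    calc t * (1 - F t) = ∫ _ in Ioi t, t ∂μ := by
          rw [setIntegral_const, smul_eq_mul, measureReal_def, hIoi, mul_comm]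
      _ ≤ B t := h1
  -- bounds on A
  have hAub : ∀ t, A t ≤ t * F t := by
    intro t
    have h1 : A t ≤ ∫ _ in Iic t, t ∂μ := by
      apply setIntegral_mono_on hint.integrableOn
        (integrableOn_const (C := t) (measure_ne_top _ _)) measurableSet_Iic
      intro x hx; exact hx
    calc A t ≤ ∫ _ in Iic t, t ∂μ := h1
      _ = t * F t := by rw [setIntegral_const, smul_eq_mul, mul_comm]; rfl
  have hAlb : ∀ t, xm * F t ≤ A t := by
    intro t
    have h1 : (∫ _ in Iic t, xm ∂μ) ≤ A t := by
      apply integral_mono_ae (integrableOn_const (C := xm) (measure_ne_top _ _)) hint.integrableOn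
      exact ae_restrict_of_ae hae_ge
    calc xm * F t = ∫ _ in Iic t, xm ∂μ := by
          rw [setIntegral_const, smul_eq_mul, mul_comm]; rfl
      _ ≤ A t := h1
  -- L < xp and xm < L
  have ht0 : xm < (xm + xp) / 2 ∧ (xm + xp) / 2 < xp := ⟨by linarith, by linarith⟩
  obtain ⟨ht0l, ht0r⟩ := ht0
  set t0 : ℝ := (xm + xp) / 2 with ht0def
  have hFt0pos : 0 < F t0 := hgt0 t0 ht0l
  have hFt0lt : F t0 < 1 := hlt1 t0 ht0r
  have hLxp : L < xp := by
    have h1 := hAub t0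
    have h2 := hBub t0
    have h3 := hAB t0
    nlinarith [hFt0pos, hFt0lt]
  have hxmL : xm < L := by
    have h1 := hAlb t0
    have h2 := hBlb t0
    have h3 := hAB t0
    nlinarith [hFt0pos, hFt0lt]
  constructor
  · -- limit at xp
    have hFt : Tendsto F (nhdsWithin xp (Iio xp)) (nhds 1) := by
      have := (hcont.tendsto xp).mono_left (nhdsWithin_le_nhds (s := Iio xp))
      rwa [hFxp] at this
    have h1F : Tendsto (fun t => 1 - F t) (nhdsWithin xp (Iio xp)) (nhds 0) := by
      have := tendsto_const_nhds (x := (1:ℝ)) (f := nhdsWithin xp (Iio xp)) |>.sub hFt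
      simpa using this
    have hBlim : Tendsto B (nhdsWithin xp (Iio xp)) (nhds 0) := by
      have hlow : Tendsto (fun t => t * (1 - F t)) (nhdsWithin xp (Iio xp)) (nhds 0) := by
        have hid : Tendsto (fun t : ℝ => t) (nhdsWithin xp (Iio xp)) (nhds xp) :=
          tendsto_id.mono_left nhdsWithin_le_nhds
        have := hid.mul h1F
        simpa using this
      have hup : Tendsto (fun t => xp * (1 - F t)) (nhdsWithin xp (Iio xp)) (nhds 0) := by
        have := h1F.const_mul xp
        simpa using this
      exact tendsto_of_tendsto_of_tendsto_of_le_of_le hlow hup hBlb hBub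
    have hAlim : Tendsto A (nhdsWithin xp (Iio xp)) (nhds L) := by
      have : Tendsto (fun t => L - B t) (nhdsWithin xp (Iio xp)) (nhds L) := by
        have := tendsto_const_nhds (x := L) (f := nhdsWithin xp (Iio xp)) |>.sub hBlim
        simpa using this
      apply this.congr
      intro t; have := hAB t; linarith
    have hdiv1 : Tendsto (fun t => A t / F t) (nhdsWithin xp (Iio xp)) (nhds L) := by
      have := hAlim.div hFt one_ne_zero
      rw [div_one] at this; exact this
    have hdiv2 : Tendsto (fun t => B t / (1 - F t)) (nhdsWithin xp (Iio xp)) (nhds xp) := by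
      have hid : Tendsto (fun t : ℝ => t) (nhdsWithin xp (Iio xp)) (nhds xp) :=
        tendsto_id.mono_left nhdsWithin_le_nhds
      apply tendsto_of_tendsto_of_tendsto_of_le_of_le' hid tendsto_const_nhds
      · filter_upwards [Ioo_mem_nhdsLT_of_mem (by constructor <;> [exact hmp; exact le_refl xp] :
          xp ∈ Ioc xm xp)] with t ht
        have hpos : 0 < 1 - F t := by linarith [hlt1 t ht.2]
        rw [le_div_iff₀ hpos]
        exact hBlb t
      · filter_upwards [Ioo_mem_nhdsLT_of_mem (by constructor <;> [exact hmp; exact le_refl xp] :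
          xp ∈ Ioc xm xp)] with t ht
        have hpos : 0 < 1 - F t := by linarith [hlt1 t ht.2]
        rw [div_le_iff₀ hpos]
        exact hBub t
    have hT : Tendsto (crossT μ) (nhdsWithin xp (Iio xp)) (nhds (L + xp - 2 * xp)) := by
      have hid : Tendsto (fun t : ℝ => 2 * t) (nhdsWithin xp (Iio xp)) (nhds (2 * xp)) :=
        (tendsto_id.mono_left nhdsWithin_le_nhds).const_mul 2
      exact (hdiv1.add hdiv2).sub hid
    rw [hT.limsup_eq]
    linarith
  · -- limit at xm
    have hFt : Tendsto F (nhdsWithin xm (Ioi xm)) (nhds 0) := by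
      have := (hcont.tendsto xm).mono_left (nhdsWithin_le_nhds (s := Ioi xm))
      rwa [hFxm] at this
    have hAlim : Tendsto A (nhdsWithin xm (Ioi xm)) (nhds 0) := by
      have hlow : Tendsto (fun t => xm * F t) (nhdsWithin xm (Ioi xm)) (nhds 0) := by
        have := hFt.const_mul xm; simpa using this
      have hup : Tendsto (fun t => t * F t) (nhdsWithin xm (Ioi xm)) (nhds 0) := by
        have hid : Tendsto (fun t : ℝ => t) (nhdsWithin xm (Ioi xm)) (nhds xm) :=
          tendsto_id.mono_left nhdsWithin_le_nhds
        have := hid.mul hFt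
        simpa using this
      exact tendsto_of_tendsto_of_tendsto_of_le_of_le hlow hup hAlb hAub
    have hBlim : Tendsto B (nhdsWithin xm (Ioi xm)) (nhds L) := by
      have : Tendsto (fun t => L - A t) (nhdsWithin xm (Ioi xm)) (nhds L) := by
        have := tendsto_const_nhds (x := L) (f := nhdsWithin xm (Ioi xm)) |>.sub hAlim
        simpa using this
      apply this.congr
      intro t; have := hAB t; linarith
    have h1F : Tendsto (fun t => 1 - F t) (nhdsWithin xm (Ioi xm)) (nhds 1) := by
      have := tendsto_const_nhds (x := (1:ℝ)) (f := nhdsWithin xm (Ioi xm)) |>.sub hFt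
      simpa using this
    have hdiv2 : Tendsto (fun t => B t / (1 - F t)) (nhdsWithin xm (Ioi xm)) (nhds L) := by
      have := hBlim.div h1F one_ne_zero
      rw [div_one] at this; exact this
    have hdiv1 : Tendsto (fun t => A t / F t) (nhdsWithin xm (Ioi xm)) (nhds xm) := by
      have hid : Tendsto (fun t : ℝ => t) (nhdsWithin xm (Ioi xm)) (nhds xm) :=
        tendsto_id.mono_left nhdsWithin_le_nhds
      apply tendsto_of_tendsto_of_tendsto_of_le_of_le' tendsto_const_nhds hid
      · filter_upwards [Ioo_mem_nhdsGT_of_mem (by constructor <;> [exact le_refl xm; exact hmp] :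
          xm ∈ Ico xm xp)] with t ht
        have hpos : 0 < F t := hgt0 t ht.1
        rw [le_div_iff₀ hpos]
        exact hAlb t
      · filter_upwards [Ioo_mem_nhdsGT_of_mem (by constructor <;> [exact le_refl xm; exact hmp] :
          xm ∈ Ico xm xp)] with t ht
        have hpos : 0 < F t := hgt0 t ht.1
        rw [div_le_iff₀ hpos]
        exact hAub t
    have hT : Tendsto (crossT μ) (nhdsWithin xm (Ioi xm)) (nhds (xm + L - 2 * xm)) := by
      have hid : Tendsto (fun t : ℝ => 2 * t) (nhdsWithin xm (Ioi xm)) (nhds (2 * xm)) :=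
        (tendsto_id.mono_left nhdsWithin_le_nhds).const_mul 2
      exact (hdiv1.add hdiv2).sub hid
    rw [hT.liminf_eq]
    linarith
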